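/- Fix integers k ≥ 1, 0 ≤ i < M, and a ∈ C_p with |1-a| < 1. Write z^i/(1-az^M)^k = Σ_{n≥0} a_n z^n as a power series, so that a_{i+Mn} = C(n+k-1, k-1) a^n and a_n = 0 otherwise. For N ≥ 0 define c_N := sup_{n ∈ ℕ} |a_n − a_{n|_N}|, where n|_N is the unique integer with 0 < n|_N ≤ M p^N and M p^N divides n − n|_N. Then lim_{N→∞} c_N = 0. -/

import Mathlib

open Filter Topology IsUltrametricDist Finset

section aux
variable {K : Type*} [NormedField K] [IsUltrametricDist K]

lemma my_pow_sub_one {x : K} (hx : ‖x‖ ≤ 1) (t : ℕ) : ‖x ^ t - 1‖ ≤ ‖x - 1‖ := by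
  have h := geom_sum_mul x t
  calc ‖x ^ t - 1‖ = ‖∑ i ∈ range t, x ^ i‖ * ‖x - 1‖ := by rw [← h, norm_mul]
    _ ≤ 1 * ‖x - 1‖ := by
        refine mul_le_mul_of_nonneg_right ?_ (norm_nonneg _)
        refine norm_sum_le_of_forall_le_of_nonneg zero_le_one fun i _ => ?_
        rw [norm_pow]
        exact pow_le_one₀ (norm_nonneg _) hx
    _ = ‖x - 1‖ := one_mul _

lemma my_norm_eq_one {α : K} (hα : ‖1 - α‖ < 1) : ‖α‖ = 1 := by
  have h1 : ‖α‖ ≤ 1 := by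
    have : α = 1 + -(1 - α) := by ring
    rw [this]
    refine (norm_add_le_max _ _).trans ?_
    rw [norm_one, norm_neg]
    exact max_le le_rfl hα.le
  have h2 : (1 : ℝ) ≤ ‖α‖ := by
    by_contra hlt
    push_neg at hlt
    have : (1 : ℝ) = ‖α + (1 - α)‖ := by norm_num
    have hle : (1:ℝ) ≤ max ‖α‖ ‖1 - α‖ := this.le.trans (norm_add_le_max _ _)
    rcases max_cases ‖α‖ ‖1 - α‖ with ⟨he, _⟩ | ⟨he, _⟩ <;> rw [he] at hle <;> linarith
  linarith

lemma my_pow_p_sub_one (p : ℕ) (hp : p.Prime) (hpK : ‖(p : K)‖ = (p : ℝ)⁻¹)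
    {x : K} (hx1 : ‖x - 1‖ < 1) :
    ‖x ^ p - 1‖ ≤ ‖x - 1‖ * max (p : ℝ)⁻¹ (‖x - 1‖ ^ (p - 1)) := by
  have hδ0 : (0:ℝ) ≤ ‖x - 1‖ := norm_nonneg _
  have hmax0 : (0:ℝ) ≤ max (p : ℝ)⁻¹ (‖x - 1‖ ^ (p - 1)) :=
    le_trans (by positivity) (le_max_left _ _)
  have key : x ^ p - 1 = ∑ j ∈ range p, (x - 1) ^ (j + 1) * (p.choose (j + 1) : K) := by
    have h := add_pow (x - 1) 1 p
    rw [sub_add_cancel] at h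
    rw [h, Finset.sum_range_succ']
    simp
  rw [key]
  refine norm_sum_le_of_forall_le_of_nonneg (mul_nonneg hδ0 hmax0) fun j hj => ?_
  rw [norm_mul, norm_pow]
  rcases eq_or_lt_of_le (Nat.succ_le_of_lt (Finset.mem_range.mp hj)) with he | hlt
  · -- j + 1 = p
    have he' : j + 1 = p := he
    rw [he', Nat.choose_self]
    simp only [Nat.cast_one, norm_one, mul_one]
    have : ‖x - 1‖ ^ p = ‖x - 1‖ * ‖x - 1‖ ^ (p - 1) := by
      conv_lhs => rw [show p = 1 + (p - 1) by omega, pow_add, pow_one]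
    rw [this]
    exact mul_le_mul_of_nonneg_left (le_max_right _ _) hδ0
  · -- j + 1 < p
    obtain ⟨m, hm⟩ := hp.dvd_choose_self (Nat.succ_ne_zero j) hlt
    have hnc : ‖(p.choose (j+1) : K)‖ ≤ (p:ℝ)⁻¹ := by
      rw [hm]
      push_cast
      rw [norm_mul, hpK]
      calc (p:ℝ)⁻¹ * ‖(m : K)‖ ≤ (p:ℝ)⁻¹ * 1 :=
            mul_le_mul_of_nonneg_left (norm_natCast_le_one K m) (by positivity)
        _ = (p:ℝ)⁻¹ := mul_one _
    calc ‖x - 1‖ ^ (j + 1) * ‖(p.choose (j+1) : K)‖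
        ≤ ‖x - 1‖ ^ 1 * (p:ℝ)⁻¹ := by
          refine mul_le_mul ?_ hnc (norm_nonneg _) (by positivity)
          exact pow_le_pow_of_le_one hδ0 hx1.le (by omega)
      _ = ‖x - 1‖ * (p:ℝ)⁻¹ := by rw [pow_one]
      _ ≤ ‖x - 1‖ * max (p : ℝ)⁻¹ (‖x - 1‖ ^ (p - 1)) :=
          mul_le_mul_of_nonneg_left (le_max_left _ _) hδ0

lemma my_tN (p : ℕ) (hp : p.Prime) (hpK : ‖(p : K)‖ = (p : ℝ)⁻¹)
    {α : K} (hα : ‖1 - α‖ < 1) (N : ℕ) :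
    ‖α ^ p ^ N - 1‖ ≤ ‖1 - α‖ * (max (p : ℝ)⁻¹ (‖1 - α‖ ^ (p - 1))) ^ N := by
  set r := ‖1 - α‖ with hr
  have hr0 : (0:ℝ) ≤ r := norm_nonneg _
  have hq0 : (0:ℝ) ≤ max (p : ℝ)⁻¹ (r ^ (p - 1)) := le_trans (by positivity) (le_max_left _ _)
  have hq1 : max (p : ℝ)⁻¹ (r ^ (p - 1)) ≤ 1 := by
    refine max_le ?_ (pow_le_one₀ hr0 hα.le)
    rw [inv_le_one_iff₀]
    right
    exact_mod_cast hp.one_le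
  induction N with
  | zero =>
      simp only [pow_zero, pow_one, mul_one]
      rw [hr, norm_sub_rev]
  | succ N ih =>
      have hle : ‖α ^ p ^ N - 1‖ ≤ r := by
        refine ih.trans ?_
        calc r * (max (p : ℝ)⁻¹ (r ^ (p - 1))) ^ N ≤ r * 1 :=
              mul_le_mul_of_nonneg_left (pow_le_one₀ hq0 hq1) hr0
          _ = r := mul_one r
      have hlt : ‖α ^ p ^ N - 1‖ < 1 := lt_of_le_of_lt hle hα
      have step := my_pow_p_sub_one p hp hpK hlt
      rw [← pow_mul, ← pow_succ] at step
      refine step.trans ?_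
      rw [pow_succ]
      have hmaxle : max (p : ℝ)⁻¹ (‖α ^ p ^ N - 1‖ ^ (p - 1)) ≤ max (p : ℝ)⁻¹ (r ^ (p - 1)) :=
        max_le_max le_rfl (pow_le_pow_left₀ (norm_nonneg _) hle _)
      calc ‖α ^ p ^ N - 1‖ * max (p : ℝ)⁻¹ (‖α ^ p ^ N - 1‖ ^ (p - 1))
          ≤ (r * (max (p : ℝ)⁻¹ (r ^ (p - 1))) ^ N) * max (p : ℝ)⁻¹ (r ^ (p - 1)) :=
            mul_le_mul ih hmaxle (le_trans (by positivity) (le_max_left _ _)) (by positivity)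
        _ = r * ((max (p : ℝ)⁻¹ (r ^ (p - 1))) ^ N * max (p : ℝ)⁻¹ (r ^ (p - 1))) := by ring

lemma my_nat_norm_pos (p : ℕ) (hp : p.Prime) (hpK : ‖(p : K)‖ = (p : ℝ)⁻¹)
    (n : ℕ) (hn : n ≠ 0) : 0 < ‖(n : K)‖ := by
  induction n using Nat.strong_induction_on with
  | _ n ih =>
    by_cases hd : p ∣ n
    · obtain ⟨m, hm⟩ := hd
      have hm0 : m ≠ 0 := by rintro rfl; simp at hm; omega
      have hmn : m < n := by
        have := hp.two_le
        calc m < 2 * m := by omega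
          _ ≤ p * m := Nat.mul_le_mul_right m hp.two_le
          _ = n := hm.symm
      have := ih m hmn hm0
      rw [hm]
      push_cast
      rw [norm_mul, hpK]
      have hp0 : (0:ℝ) < p := by exact_mod_cast hp.pos
      exact mul_pos (by positivity) this
    · have hco : Nat.Coprime p n := (hp.coprime_iff_not_dvd).mpr hd
      have hico : IsCoprime (p : ℤ) (n : ℤ) := Int.isCoprime_iff_gcd_eq_one.mpr hco
      obtain ⟨a, b, hab⟩ := hico
      have hcast : (a : K) * (p : K) + (b : K) * (n : K) = 1 := by
        have := congrArg (fun z : ℤ => (z : K)) hab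
        push_cast at this
        simpa using this
      have h1 : (1:ℝ) ≤ max ((p:ℝ)⁻¹) ‖(n : K)‖ := by
        calc (1:ℝ) = ‖(1 : K)‖ := norm_one.symm
          _ = ‖(a : K) * (p : K) + (b : K) * (n : K)‖ := by rw [hcast]
          _ ≤ max ‖(a : K) * (p : K)‖ ‖(b : K) * (n : K)‖ := norm_add_le_max _ _
          _ ≤ max ((p:ℝ)⁻¹) ‖(n : K)‖ := by
              refine max_le_max ?_ ?_
              · rw [norm_mul, hpK]
                calc ‖(a:K)‖ * (p:ℝ)⁻¹ ≤ 1 * (p:ℝ)⁻¹ :=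
                      mul_le_mul_of_nonneg_right (norm_intCast_le_one K a) (by positivity)
                  _ = (p:ℝ)⁻¹ := one_mul _
              · rw [norm_mul]
                calc ‖(b:K)‖ * ‖(n:K)‖ ≤ 1 * ‖(n:K)‖ :=
                      mul_le_mul_of_nonneg_right (norm_intCast_le_one K b) (norm_nonneg _)
                  _ = ‖(n:K)‖ := one_mul _
      have hpinv : (p:ℝ)⁻¹ < 1 := by
        rw [inv_lt_one_iff₀]
        right
        exact_mod_cast hp.one_lt
      rcases max_cases ((p:ℝ)⁻¹) ‖(n : K)‖ with ⟨he, _⟩ | ⟨he, _⟩ <;> rw [he] at h1 <;> linarith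


lemma my_choose_diff (p : ℕ) (hp : p.Prime) (hpK : ‖(p : K)‖ = (p : ℝ)⁻¹)
    (k N q j' : ℕ) :
    ‖((j' + p ^ N * q + k - 1).choose (k - 1) : K) - ((j' + k - 1).choose (k - 1) : K)‖
      ≤ ‖(((k - 1).factorial : ℕ) : K)‖⁻¹ * ((p : ℝ)⁻¹) ^ N := by
  set j := j' + p ^ N * q with hj
  -- congruence mod p^N of the descending factorials
  have hmod : j ≡ j' [MOD p ^ N] := by
    show j % p ^ N = j' % p ^ N
    rw [hj, Nat.add_mul_mod_self_left]
  have hdesc : (j + k - 1).descFactorial (k - 1) ≡ (j' + k - 1).descFactorial (k - 1)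
      [MOD p ^ N] := by
    rw [← ZMod.natCast_eq_natCast_iff]
    rw [Nat.descFactorial_eq_prod_range, Nat.descFactorial_eq_prod_range]
    push_cast
    refine Finset.prod_congr rfl fun s hs => ?_
    have hs' : s < k - 1 := Finset.mem_range.mp hs
    have e1 : j + k - 1 - s = (k - 1 - s) + j := by omega
    have e2 : j' + k - 1 - s = (k - 1 - s) + j' := by omega
    rw [e1, e2]
    push_cast
    congr 1
    exact_mod_cast (ZMod.natCast_eq_natCast_iff _ _ _).mpr hmod
  -- extract an integer witness
  obtain ⟨w, hw⟩ := (Nat.ModEq.dvd hdesc : (↑(p ^ N) : ℤ) ∣ _)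
  -- the norm of the difference of descending factorials
  have hdnorm : ‖((j + k - 1).descFactorial (k - 1) : K)
      - ((j' + k - 1).descFactorial (k - 1) : K)‖ ≤ ((p : ℝ)⁻¹) ^ N := by
    have hcast : ((j + k - 1).descFactorial (k - 1) : K)
        - ((j' + k - 1).descFactorial (k - 1) : K) = -((p : K) ^ N * (w : K)) := by
      have := congrArg (fun z : ℤ => (z : K)) hw
      push_cast at this
      rw [← this]
      ring
    rw [hcast, norm_neg, norm_mul, norm_pow, hpK]
    calc ((p:ℝ)⁻¹) ^ N * ‖(w : K)‖ ≤ ((p:ℝ)⁻¹) ^ N * 1 :=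
          mul_le_mul_of_nonneg_left (norm_intCast_le_one K w) (by positivity)
      _ = ((p:ℝ)⁻¹) ^ N := mul_one _
  -- relate descFactorial and choose in K
  have hF : (0:ℝ) < ‖(((k - 1).factorial : ℕ) : K)‖ :=
    my_nat_norm_pos p hp hpK _ (Nat.factorial_ne_zero _)
  have hrel : (((k - 1).factorial : ℕ) : K) *
      (((j + k - 1).choose (k - 1) : K) - ((j' + k - 1).choose (k - 1) : K))
      = ((j + k - 1).descFactorial (k - 1) : K)
        - ((j' + k - 1).descFactorial (k - 1) : K) := by
    rw [Nat.descFactorial_eq_factorial_mul_choose, Nat.descFactorial_eq_factorial_mul_choose]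
    push_cast
    ring
  have := congrArg norm hrel
  rw [norm_mul] at this
  calc ‖((j + k - 1).choose (k - 1) : K) - ((j' + k - 1).choose (k - 1) : K)‖
      = ‖(((k - 1).factorial : ℕ) : K)‖⁻¹ *
        (‖(((k - 1).factorial : ℕ) : K)‖ *
          ‖((j + k - 1).choose (k - 1) : K) - ((j' + k - 1).choose (k - 1) : K)‖) := by
        field_simp
    _ ≤ ‖(((k - 1).factorial : ℕ) : K)‖⁻¹ * ((p : ℝ)⁻¹) ^ N := by
        refine mul_le_mul_of_nonneg_left ?_ (by positivity)
        rw [this]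
        exact hdnorm

end aux
theorem stmt1 (p : ℕ) (hp : p.Prime) {K : Type*} [NormedField K]
    (hna : IsNonarchimedean (norm : K → ℝ)) (hpK : ‖(p : K)‖ = (p : ℝ)⁻¹)
    (M k i : ℕ) (hM : 0 < M) (hMp : ¬ p ∣ M) (hk : 1 ≤ k) (hi : i < M)
    (α : K) (hα : ‖1 - α‖ < 1)
    (c : ℕ → K)
    (hc1 : ∀ n : ℕ, c (i + M * n) = (Nat.choose (n + k - 1) (k - 1) : K) * α ^ n)
    (hc2 : ∀ m : ℕ, (∀ n : ℕ, m ≠ i + M * n) → c m = 0) :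
    Tendsto (fun N : ℕ => ⨆ n : ℕ, ‖c (n + 1) - c ((n % (M * p ^ N)) + 1)‖)
      atTop (𝓝 0) := by
  haveI : IsUltrametricDist K := isUltrametricDist_of_isNonarchimedean_norm hna
  set r : ℝ := ‖1 - α‖ with hrdef
  have hr0 : (0:ℝ) ≤ r := norm_nonneg _
  set qg : ℝ := max (p : ℝ)⁻¹ (r ^ (p - 1)) with hqgdef
  set B : ℝ := ‖(((k - 1).factorial : ℕ) : K)‖⁻¹ with hBdef
  have hB0 : 0 ≤ B := inv_nonneg.mpr (norm_nonneg _)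
  have hp0 : (0:ℝ) < p := by exact_mod_cast hp.pos
  have hpinv0 : (0:ℝ) ≤ (p:ℝ)⁻¹ := by positivity
  have hpinv1 : (p:ℝ)⁻¹ < 1 := by
    rw [inv_lt_one_iff₀]; right; exact_mod_cast hp.one_lt
  have hqg0 : (0:ℝ) ≤ qg := le_trans hpinv0 (le_max_left _ _)
  have hqg1 : qg < 1 := max_lt hpinv1 (by
      have : r ^ (p - 1) < 1 ^ (p - 1) := by
        refine pow_lt_pow_left₀ hα hr0 ?_
        have := hp.two_le; omega
      simpa using this)
  set b : ℕ → ℝ := fun N => max (B * ((p:ℝ)⁻¹) ^ N) (r * qg ^ N) with hbdef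
  have hb0 : ∀ N, 0 ≤ b N := fun N => le_trans (by positivity) (le_max_left _ _)
  have hαn : ‖α‖ = 1 := my_norm_eq_one hα
  -- the upper bound tends to zero
  have hbt : Tendsto b atTop (𝓝 0) := by
    have t1 : Tendsto (fun N : ℕ => B * ((p:ℝ)⁻¹) ^ N) atTop (𝓝 0) := by
      simpa using (tendsto_pow_atTop_nhds_zero_of_lt_one hpinv0 hpinv1).const_mul B
    have t2 : Tendsto (fun N : ℕ => r * qg ^ N) atTop (𝓝 0) := by
      simpa using (tendsto_pow_atTop_nhds_zero_of_lt_one hqg0 hqg1).const_mul r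
    simpa only [max_self] using t1.max t2
  refine squeeze_zero (fun N => Real.iSup_nonneg fun n => norm_nonneg _) (fun N => ?_) hbt
  refine ciSup_le fun n => ?_
  -- setup for a single n
  set D := M * p ^ N with hD
  have hDpos : 0 < D := Nat.mul_pos hM (Nat.pow_pos hp.pos)
  set q := n / D with hq
  set m' := n % D + 1 with hm'def
  have hsplit : n + 1 = m' + D * q := by
    show n + 1 = n % D + 1 + D * (n / D)
    have h0 := Nat.mod_add_div n D
    conv_lhs => rw [← h0]
    ring
  by_cases hEx : ∃ j, n + 1 = i + M * j
  · obtain ⟨j, hj⟩ := hEx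
    have h1 : m' + M * (p ^ N * q) = i + M * j := by
      have e : m' + M * (p ^ N * q) = n + 1 := by
        rw [hsplit, hD]; ring
      rw [e, hj]
    have h2 : M * (p ^ N * q) < M * (j + 1) := by
      calc M * (p ^ N * q) < m' + M * (p ^ N * q) := by omega
        _ = i + M * j := h1
        _ < M + M * j := by omega
        _ = M * (j + 1) := by ring
    have hqj : p ^ N * q ≤ j := Nat.lt_succ_iff.mp (Nat.lt_of_mul_lt_mul_left h2)
    set j' := j - p ^ N * q with hj'def
    have hjj' : j = j' + p ^ N * q := by omega
    have hm' : m' = i + M * j' := by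
      have e2 : m' + M * (p ^ N * q) = i + M * j' + M * (p ^ N * q) := by
        rw [h1, hjj']; ring
      omega
    have hcm : c (n + 1) = ((j + k - 1).choose (k - 1) : K) * α ^ j := by
      rw [hj]; exact hc1 j
    have hcm' : c m' = ((j' + k - 1).choose (k - 1) : K) * α ^ j' := by
      rw [hm']; exact hc1 j'
    have hpowj : α ^ j = α ^ j' * α ^ (p ^ N * q) := by
      rw [hjj', pow_add]
    have halg : c (n + 1) - c m' =
        (((j + k - 1).choose (k - 1) : K) - ((j' + k - 1).choose (k - 1) : K)) * α ^ j
        + ((j' + k - 1).choose (k - 1) : K) * α ^ j' * (α ^ (p ^ N * q) - 1) := by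
      rw [hcm, hcm', hpowj]; ring
    rw [halg]
    refine le_trans (hna _ _) ?_
    refine max_le_max ?_ ?_
    · -- binomial difference term
      rw [norm_mul, norm_pow, hαn, one_pow, mul_one]
      calc ‖((j + k - 1).choose (k - 1) : K) - ((j' + k - 1).choose (k - 1) : K)‖
          = ‖((j' + p ^ N * q + k - 1).choose (k - 1) : K)
              - ((j' + k - 1).choose (k - 1) : K)‖ := by rw [← hjj']
        _ ≤ B * ((p:ℝ)⁻¹) ^ N := my_choose_diff p hp hpK k N q j'
    · -- power difference term
      have hx : ‖α ^ p ^ N‖ ≤ 1 := by rw [norm_pow, hαn, one_pow]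
      have hpw : ‖α ^ (p ^ N * q) - 1‖ ≤ r * qg ^ N := by
        have := my_pow_sub_one hx q
        rw [← pow_mul] at this
        exact this.trans (my_tN p hp hpK hα N)
      calc ‖((j' + k - 1).choose (k - 1) : K) * α ^ j' * (α ^ (p ^ N * q) - 1)‖
          = ‖((j' + k - 1).choose (k - 1) : K)‖ * ‖α ^ j'‖ * ‖α ^ (p ^ N * q) - 1‖ := by
            rw [norm_mul, norm_mul]
        _ ≤ 1 * 1 * (r * qg ^ N) := by
            refine mul_le_mul (mul_le_mul (norm_natCast_le_one K _) ?_ (norm_nonneg _)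
              zero_le_one) hpw (norm_nonneg _) (by norm_num)
            rw [norm_pow, hαn, one_pow]
        _ = r * qg ^ N := by ring
  · -- both coefficients vanish
    have hz : c (n + 1) = 0 := by
      apply hc2
      intro j hj
      exact hEx ⟨j, hj⟩
    have hz' : c m' = 0 := by
      apply hc2
      intro j' hj'
      apply hEx
      refine ⟨j' + p ^ N * q, ?_⟩
      calc n + 1 = m' + D * q := hsplit
        _ = i + M * j' + (M * p ^ N) * q := by rw [hj', hD]
        _ = i + M * (j' + p ^ N * q) := by ring
    rw [hz, hz', sub_zero, norm_zero]
    exact hb0 N
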